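/- Let Q be a prime, let d ≥ 1, and define f_d : ℤ/Qℤ → (ℤ/Qℤ)^{d+1} by f_d(a) := (a, a², a³, …, a^d, a^{d+2}). Then for any a_1, …, a_{d+2} ∈ ℤ/Qℤ, the d+2 points f_d(a_1), …, f_d(a_{d+2}) all lie in some affine subspace of (ℤ/Qℤ)^{d+1} of dimension at most d (i.e., a d-dimensional affine hyperplane) if and only if a_i = a_j for some i ≠ j, or a_1 + ⋯ + a_{d+2} = 0 in ℤ/Qℤ. -/

import Mathlib

open Polynomial

section Aux

variable {K : Type*} [Field K] [DecidableEq K]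

/-- The exponent function: `e ↦ e+1` for `e < d`, and `d+2` for `e = d`. -/
private def expo (d : ℕ) (e : Fin (d + 1)) : ℕ :=
  if (e : ℕ) < d then (e : ℕ) + 1 else d + 2

private lemma expo_le (d : ℕ) (e : Fin (d + 1)) : expo d e ≤ d + 2 := by
  unfold expo; split <;> omega

private lemma expo_pos (d : ℕ) (e : Fin (d + 1)) : 1 ≤ expo d e := by
  unfold expo; split <;> omega

private lemma expo_ne (d : ℕ) (e : Fin (d + 1)) : expo d e ≠ d + 1 := by
  unfold expo
  have := e.isLt
  split <;> omega

private lemma expo_inj (d : ℕ) : Function.Injective (expo d) := by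
  intro e1 e2 h
  have h1 := e1.isLt; have h2 := e2.isLt
  unfold expo at h
  ext
  split at h <;> split at h <;> omega

private lemma expo_last (d : ℕ) : expo d (Fin.last d) = d + 2 := by
  simp [expo]

end Aux

/-- Let `Q` be prime, `d ≥ 1`, and `f_d : ℤ/Qℤ → (ℤ/Qℤ)^{d+1}` be
`f_d(a) = (a, a², …, a^d, a^{d+2})`. For any `a_1, …, a_{d+2} ∈ ℤ/Qℤ`, the points
`f_d(a_1), …, f_d(a_{d+2})` all lie in some affine subspace of `(ℤ/Qℤ)^{d+1}` of dimension
at most `d` (a coset `v + W` with `dim W ≤ d`) iff `a_i = a_j` for some `i ≠ j`, or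
`a_1 + ⋯ + a_{d+2} = 0` in `ℤ/Qℤ`. -/
theorem stmt_17 (Q : ℕ) (hQ : Q.Prime) (d : ℕ) (hd : 1 ≤ d)
    (a : Fin (d + 2) → ZMod Q) :
    (∃ (v : Fin (d + 1) → ZMod Q) (W : Submodule (ZMod Q) (Fin (d + 1) → ZMod Q)),
        Module.finrank (ZMod Q) W ≤ d ∧
        ∀ i, (fun e : Fin (d + 1) =>
            a i ^ (if (e : ℕ) < d then (e : ℕ) + 1 else d + 2)) - v ∈ W)
      ↔ ((∃ i j, i ≠ j ∧ a i = a j) ∨ ∑ i, a i = 0) := by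
  haveI : Fact Q.Prime := ⟨hQ⟩
  set f : ZMod Q → Fin (d + 1) → ZMod Q := fun x e => x ^ expo d e with hfdef
  have hfa : ∀ x : ZMod Q, (fun e : Fin (d + 1) => x ^ (if (e : ℕ) < d then (e : ℕ) + 1 else d + 2))
      = f x := fun x => rfl
  -- the polynomial ∏ (X - a i)
  set q : (ZMod Q)[X] := ∏ i : Fin (d + 2), (X - C (a i)) with hqdef
  have hqmonic : q.Monic := monic_prod_of_monic _ _ fun i _ => monic_X_sub_C _
  have hqdeg : q.natDegree = d + 2 := by
    rw [hqdef, natDegree_prod _ _ fun i _ => X_sub_C_ne_zero (a i)]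
    simp
  have hqnext : q.coeff (d + 1) = -∑ i, a i := by
    have h1 : q.nextCoeff = -∑ i, a i := prod_X_sub_C_nextCoeff a
    rwa [nextCoeff_of_natDegree_pos (by omega), hqdeg] at h1
  have hqeval : ∀ i, q.eval (a i) = 0 := by
    intro i
    rw [hqdef, eval_prod]
    exact Finset.prod_eq_zero (Finset.mem_univ i) (by simp)
  constructor
  · rintro ⟨v, W, hWrank, hmem⟩
    by_contra hcon
    push_neg at hcon
    obtain ⟨hne, hsum⟩ := hcon
    have hinj : Function.Injective a := by
      intro i j h
      by_contra hij
      exact hne i j hij h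
    have hWlt : W < ⊤ := by
      rcases lt_or_eq_of_le (le_top (a := W)) with h | h
      · exact h
      · exfalso
        have : Module.finrank (ZMod Q) W = d + 1 := by
          rw [h, finrank_top, Module.finrank_fin_fun]
        omega
    obtain ⟨φ, hφ, hker⟩ := Submodule.exists_dual_map_eq_bot_of_lt_top hWlt inferInstance
    set c : Fin (d + 1) → ZMod Q := fun e => φ (fun j => if e = j then 1 else 0) with hcdef
    have hφeq : ∀ x, φ x = ∑ e, x e * c e := by
      intro x
      rw [LinearMap.pi_apply_eq_sum_univ]
      simp [hcdef, smul_eq_mul]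
    set p : (ZMod Q)[X] := (∑ e : Fin (d + 1), C (c e) * X ^ expo d e) - C (φ v) with hpdef
    have hpc : ∀ n, p.coeff n =
        (∑ e : Fin (d + 1), if n = expo d e then c e else 0) - (if n = 0 then φ v else 0) := by
      intro n
      simp [hpdef, finset_sum_coeff, coeff_C, coeff_X_pow, mul_ite, mul_one, mul_zero]
    have hpc' : ∀ e : Fin (d + 1), p.coeff (expo d e) = c e := by
      intro e
      rw [hpc]
      rw [Finset.sum_eq_single e (fun b _ hb => by
        rw [if_neg]; exact fun h => hb (expo_inj d h.symm)) (by simp), if_pos rfl,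
        if_neg (by have := expo_pos d e; omega), sub_zero]
    have hpd1 : p.coeff (d + 1) = 0 := by
      rw [hpc]
      rw [Finset.sum_eq_zero (fun e _ => by rw [if_neg (fun h => expo_ne d e h.symm)]),
        if_neg (by omega), sub_zero]
    have hpdeg : p.natDegree ≤ d + 2 := by
      rw [natDegree_le_iff_coeff_eq_zero]
      intro m hm
      rw [hpc, Finset.sum_eq_zero (fun e _ => by rw [if_neg (by have := expo_le d e; omega)]),
        if_neg (by omega), sub_zero]
    have hpne : p ≠ 0 := by
      obtain ⟨x, hx⟩ := DFunLike.ne_iff.mp hφ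
      have : ∃ e, c e ≠ 0 := by
        by_contra hall
        push_neg at hall
        rw [hφeq] at hx
        exact hx (by simp [hall])
      obtain ⟨e, he⟩ := this
      intro h0
      rw [← hpc' e, h0] at he
      simp at he
    have hpeval : ∀ i, p.eval (a i) = 0 := by
      intro i
      have h1 : f (a i) - v ∈ W := by rw [← hfa (a i)]; exact hmem i
      have h2 : φ (f (a i) - v) = 0 := by
        have : φ (f (a i) - v) ∈ W.map φ := Submodule.mem_map_of_mem h1
        rw [hker] at this
        simpa using this
      rw [map_sub, sub_eq_zero] at h2
      have h3 : p.eval (a i) = φ (f (a i)) - φ v := by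
        rw [hφeq]
        simp only [hpdef, eval_sub, eval_finset_sum, eval_mul, eval_C, eval_pow, eval_X, hfdef]
        rw [Finset.sum_congr rfl fun e _ => mul_comm (c e) (a i ^ expo d e)]
      rw [h3, h2, sub_self]
    set lam : ZMod Q := p.coeff (d + 2) with hlam
    set r : (ZMod Q)[X] := p - C lam * q with hrdef
    have hreval : ∀ i, r.eval (a i) = 0 := by
      intro i
      simp [hrdef, hpeval i, hqeval i]
    have hrdeg : r.natDegree ≤ d + 1 := by
      rw [natDegree_le_iff_coeff_eq_zero]
      intro m hm
      by_cases h : m = d + 2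
      · subst h
        have hq2 : q.coeff (d + 2) = 1 := by
          have := hqmonic.coeff_natDegree
          rwa [hqdeg] at this
        rw [hrdef, coeff_sub, coeff_C_mul, hq2, mul_one, ← hlam, sub_self]
      · rw [hrdef, coeff_sub, coeff_C_mul,
          coeff_eq_zero_of_natDegree_lt (lt_of_le_of_lt hpdeg (by omega)),
          coeff_eq_zero_of_natDegree_lt (by omega), mul_zero, sub_self]
    have hr0 : r = 0 := by
      apply eq_zero_of_natDegree_lt_card_of_eval_eq_zero r hinj hreval
      rw [Fintype.card_fin]
      omega
    have hpq : p = C lam * q := by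
      rw [← sub_eq_zero]; exact hr0
    have : lam = 0 := by
      have h1 : p.coeff (d + 1) = lam * q.coeff (d + 1) := by rw [hpq, coeff_C_mul]
      rw [hpd1, hqnext] at h1
      rcases mul_eq_zero.mp h1.symm with h | h
      · exact h
      · exact absurd (neg_eq_zero.mp h) hsum
    rw [this, map_zero, zero_mul] at hpq
    exact hpne hpq
  · rintro (⟨i, j, hij, heq⟩ | hsum)
    · -- duplicate point case
      set s : Finset (Fin (d + 2)) := (Finset.univ.erase i).erase j with hsdef
      have hscard : s.card = d := by
        rw [hsdef, Finset.card_erase_of_mem, Finset.card_erase_of_mem (Finset.mem_univ i)]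
        · simp
        · exact Finset.mem_erase.mpr ⟨Ne.symm hij, Finset.mem_univ j⟩
      classical
      set g : Fin (d + 2) → (Fin (d + 1) → ZMod Q) := fun k => f (a k) - f (a i) with hgdef
      refine ⟨f (a i), Submodule.span (ZMod Q) (↑(s.image g) : Set (Fin (d + 1) → ZMod Q)), ?_, ?_⟩
      · calc Module.finrank (ZMod Q) (Submodule.span (ZMod Q) (↑(s.image g) : Set (Fin (d + 1) → ZMod Q)))
            ≤ (s.image g).card := finrank_span_finset_le_card _
          _ ≤ s.card := Finset.card_image_le
          _ = d := hscard
      · intro k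
        rw [hfa (a k)]
        by_cases hk1 : k = i
        · rw [hk1, sub_self]
          exact Submodule.zero_mem _
        by_cases hk2 : k = j
        · rw [hk2]
          have : f (a j) - f (a i) = 0 := by rw [← heq, sub_self]
          rw [this]
          exact Submodule.zero_mem _
        · apply Submodule.subset_span
          rw [Finset.coe_image]
          exact ⟨k, by simp [hsdef, hk1, hk2], rfl⟩
    · -- sum zero case
      have hq1 : q.coeff (d + 1) = 0 := by rw [hqnext, hsum, neg_zero]
      set c : Fin (d + 1) → ZMod Q := fun e => q.coeff (expo d e) with hcdef
      have hclast : c (Fin.last d) = 1 := by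
        rw [hcdef]
        simp only [expo_last]
        rw [← hqdeg]
        exact hqmonic.coeff_natDegree
      set φ : (Fin (d + 1) → ZMod Q) →ₗ[ZMod Q] ZMod Q :=
        ∑ e : Fin (d + 1), c e • LinearMap.proj e with hφdef
      have hφapp : ∀ x, φ x = ∑ e, c e * x e := by
        intro x
        rw [hφdef]
        simp [LinearMap.sum_apply]
      -- key evaluation identity
      have hkey : ∀ x : ZMod Q, (∑ e, c e * x ^ expo d e) = q.eval x - q.coeff 0 := by
        intro x
        have hdeg3 : q.natDegree < d + 3 := by omega
        have heval := eval_eq_sum_range' hdeg3 x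
        have hset : Finset.range (d + 3) =
            insert 0 (insert (d + 1) (Finset.image (expo d) Finset.univ)) := by
          ext n
          simp only [Finset.mem_range, Finset.mem_insert, Finset.mem_image, Finset.mem_univ,
            true_and]
          constructor
          · intro hn
            by_cases h0 : n = 0
            · exact Or.inl h0
            by_cases h1 : n = d + 1
            · exact Or.inr (Or.inl h1)
            · refine Or.inr (Or.inr ?_)
              by_cases h2 : n = d + 2
              · exact ⟨Fin.last d, by rw [expo_last, h2]⟩
              · refine ⟨⟨n - 1, by omega⟩, ?_⟩
                show (if (n - 1 : ℕ) < d then (n - 1 : ℕ) + 1 else d + 2) = n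
                rw [if_pos (by omega)]
                omega
          · rintro (rfl | rfl | ⟨e, rfl⟩)
            · omega
            · omega
            · have := expo_le d e; omega
        have h0ni : (0 : ℕ) ∉ insert (d + 1) (Finset.image (expo d) Finset.univ) := by
          simp only [Finset.mem_insert, Finset.mem_image, Finset.mem_univ, true_and]
          push_neg
          exact ⟨by omega, fun e h => by have := expo_pos d e; omega⟩
        have h1ni : (d + 1 : ℕ) ∉ Finset.image (expo d) Finset.univ := by
          simp only [Finset.mem_image, Finset.mem_univ, true_and]
          push_neg
          exact fun e h => expo_ne d e h
        rw [hset, Finset.sum_insert h0ni, Finset.sum_insert h1ni,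
          Finset.sum_image (fun e _ e' _ h => expo_inj d h)] at heval
        rw [hq1, zero_mul] at heval
        rw [heval, pow_zero, mul_one]
        ring
      refine ⟨Pi.single (Fin.last d) (-q.coeff 0), LinearMap.ker φ, ?_, ?_⟩
      · have hklt : LinearMap.ker φ < ⊤ := by
          rw [lt_top_iff_ne_top]
          intro h
          have h1 : φ (Pi.single (Fin.last d) 1) = 0 := by
            have : Pi.single (Fin.last d) (1 : ZMod Q) ∈ LinearMap.ker φ := by
              rw [h]; trivial
            simpa using this
          rw [hφapp] at h1
          rw [Finset.sum_eq_single (Fin.last d)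
            (fun b _ hb => by rw [Pi.single_eq_of_ne hb, mul_zero])
            (by simp)] at h1
          rw [Pi.single_eq_same, hclast, one_mul] at h1
          exact one_ne_zero h1
        have := Submodule.finrank_lt (K := ZMod Q) (V := Fin (d + 1) → ZMod Q) hklt.ne
        rw [Module.finrank_fin_fun] at this
        omega
      · intro i
        rw [hfa (a i), LinearMap.mem_ker, map_sub]
        have h1 : φ (f (a i)) = -q.coeff 0 := by
          rw [hφapp]
          have : ∀ e, f (a i) e = a i ^ expo d e := fun e => rfl
          simp only [this]
          rw [hkey (a i), hqeval i, zero_sub]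
        have h2 : φ (Pi.single (Fin.last d) (-q.coeff 0)) = -q.coeff 0 := by
          rw [hφapp]
          rw [Finset.sum_eq_single (Fin.last d)
            (fun b _ hb => by rw [Pi.single_eq_of_ne hb, mul_zero])
            (by simp)]
          rw [Pi.single_eq_same, hclast, one_mul]
        rw [h1, h2, sub_self]
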